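/- arXiv:1909.10066 — 5 statements merged into one kernel-verified Lean document; each statement's English description precedes it below -/
import Mathlib

section
/- For any opinions ω_AB, ω_B1C1, ω_B2C2 (with α_AB + β_AB + γ_AB > 0), the discounting operation distributes over the combining operation in the second argument: Θ(Δ(ω_AB, ω_B1C1), Δ(ω_AB, ω_B2C2)) = Δ(ω_AB, Θ(ω_B1C1, ω_B2C2)). -/
structure Opinion where
  a : ℝ
  b : ℝ
  c : ℝ

noncomputable def disc (x y : Opinion) : Opinion :=
  let s := x.a + x.b + x.c
  ⟨x.a * y.a / s, x.a * y.b / s, ((x.b + x.c) * (y.a + y.b + y.c) + x.a * y.c) / s⟩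

def comb (x y : Opinion) : Opinion := ⟨x.a + y.a, x.b + y.b, x.c + y.c⟩

def osum (x : Opinion) : ℝ := x.a + x.b + x.c

theorem stmt0 (wAB w1 w2 : Opinion) (h : 0 < osum wAB) :
    comb (disc wAB w1) (disc wAB w2) = disc wAB (comb w1 w2) := by
  have hs : wAB.a + wAB.b + wAB.c ≠ 0 := ne_of_gt h
  simp only [disc, comb, Opinion.mk.injEq]
  refine ⟨?_, ?_, ?_⟩ <;> field_simp <;> ring
end

section
/- Discounting does not distribute over combining in the first argument: there exist opinions ω_A1B1, ω_A2B2, ω_BC (with positive component sums) such that Θ(Δ(ω_A1B1, ω_BC), Δ(ω_A2B2, ω_BC)) ≠ Δ(Θ(ω_A1B1, ω_A2B2), ω_BC). -/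
theorem stmt3 : ∃ w1 w2 w3 : Opinion,
    (0 ≤ w1.a ∧ 0 ≤ w1.b ∧ 0 ≤ w1.c) ∧ (0 ≤ w2.a ∧ 0 ≤ w2.b ∧ 0 ≤ w2.c) ∧
    (0 ≤ w3.a ∧ 0 ≤ w3.b ∧ 0 ≤ w3.c) ∧
    0 < osum w1 ∧ 0 < osum w2 ∧ 0 < osum w3 ∧
    comb (disc w1 w3) (disc w2 w3) ≠ disc (comb w1 w2) w3 := by
  refine ⟨⟨1,0,0⟩, ⟨0,1,0⟩, ⟨1,0,0⟩, by norm_num, by norm_num, by norm_num,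
    by norm_num [osum], by norm_num [osum], by norm_num [osum], fun h => ?_⟩
  have := congrArg Opinion.a h
  norm_num [comb, disc] at this
end

section
/- The discounting operation is associative: for opinions ω₁, ω₂, ω₃ whose component sums are positive, Δ(Δ(ω₁, ω₂), ω₃) = Δ(ω₁, Δ(ω₂, ω₃)). -/
theorem stmt4 (w1 w2 w3 : Opinion) (h1 : 0 < osum w1) (h2 : 0 < osum w2)
    (h3 : 0 < osum w3) :
    disc (disc w1 w2) w3 = disc w1 (disc w2 w3) := by
  obtain ⟨a1, b1, c1⟩ := w1
  obtain ⟨a2, b2, c2⟩ := w2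
  obtain ⟨a3, b3, c3⟩ := w3
  simp only [osum] at h1 h2 h3
  have h1' : a1 + b1 + c1 ≠ 0 := ne_of_gt h1
  have h2' : a2 + b2 + c2 ≠ 0 := ne_of_gt h2
  simp only [disc]
  have hs : a1 * a2 / (a1 + b1 + c1) + a1 * b2 / (a1 + b1 + c1) +
      ((b1 + c1) * (a2 + b2 + c2) + a1 * c2) / (a1 + b1 + c1) = a2 + b2 + c2 := by
    field_simp
    ring
  rw [hs]
  refine Opinion.mk.injEq .. ▸ ⟨?_, ?_, ?_⟩ <;> field_simp <;> ring
end

section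
/- The generalized distributivity for finitely many original opinions: for an opinion ω with positive component sum and a finite list of opinions ω₁, …, ωₙ (n ≥ 1), the componentwise sum of Δ(ω, ωᵢ) over i equals Δ(ω, Σᵢ ωᵢ), where Σ denotes componentwise sum. -/
theorem stmt9 (w : Opinion) (h : 0 < osum w) (l : List Opinion) (hne : l ≠ []) :
    (l.map (disc w)).foldr comb ⟨0, 0, 0⟩ = disc w (l.foldr comb ⟨0, 0, 0⟩) := by
  have hs : w.a + w.b + w.c ≠ 0 := ne_of_gt h
  clear hne
  induction l with
  | nil => simp [disc, comb]
  | cons x xs ih =>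
    simp only [List.map_cons, List.foldr_cons, ih]
    simp only [disc, comb]
    refine Opinion.mk.injEq .. ▸ ⟨?_, ?_, ?_⟩ <;> field_simp <;> ring
end

section
/- The uncertain-evidence fraction never decreases under discounting: for opinions ω₁, ω₂ with positive component sums, γ(Δ(ω₁, ω₂))/(component sum of Δ(ω₁, ω₂)) ≥ γ₂/(α₂+β₂+γ₂), where γ denotes the third component. -/
theorem stmt17 (w1 w2 : Opinion)
    (h1a : 0 ≤ w1.a) (h1b : 0 ≤ w1.b) (h1c : 0 ≤ w1.c)
    (h2a : 0 ≤ w2.a) (h2b : 0 ≤ w2.b) (h2c : 0 ≤ w2.c)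
    (h1 : 0 < osum w1) (h2 : 0 < osum w2) :
    w2.c / (w2.a + w2.b + w2.c) ≤ (disc w1 w2).c / osum (disc w1 w2) := by
  have hs1 : (0:ℝ) < w1.a + w1.b + w1.c := h1
  have hs2 : (0:ℝ) < w2.a + w2.b + w2.c := h2
  have hsum : osum (disc w1 w2) = w2.a + w2.b + w2.c := by
    simp only [osum, disc]
    field_simp
    ring
  rw [hsum]
  gcongr
  show w2.c ≤ ((w1.b + w1.c) * (w2.a + w2.b + w2.c) + w1.a * w2.c) / (w1.a + w1.b + w1.c)
  rw [le_div_iff₀ hs1]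
  nlinarith [mul_nonneg h1b h2a, mul_nonneg h1b h2b, mul_nonneg h1c h2a, mul_nonneg h1c h2b]
end
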